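/- arXiv:2502.01970 — 3 statements merged into one kernel-verified Lean document; each statement's English description precedes it below -/
import Mathlib

section
/- The number of classical parking functions of length n, i.e. sequences (a_1,...,a_n) of positive integers whose increasing rearrangement (b_1,...,b_n) satisfies b_i ≤ i for all i, equals (n+1)^(n-1). -/
open Finset

namespace PFaux

variable {n : ℕ}

/-- Number of indices with value `d`. -/
def mcount (a : Fin n → ZMod (n+1)) (d : ZMod (n+1)) : ℕ :=
  (univ.filter fun j => a j = d).card

/-- Prefix sums of `mcount` along the naturals. -/
def Ssum (a : Fin n → ZMod (n+1)) (u : ℕ) : ℕ :=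
  ∑ v ∈ Finset.range u, mcount a (v : ZMod (n+1))

lemma sum_mcount (a : Fin n → ZMod (n+1)) : ∑ d : ZMod (n+1), mcount a d = n := by
  have h := Finset.card_eq_sum_card_fiberwise
    (s := (univ : Finset (Fin n))) (t := (univ : Finset (ZMod (n+1)))) (f := a)
    (fun x _ => mem_univ _)
  simpa [mcount] using h.symm

lemma sum_range_zmod (g : ZMod (n+1) → ℕ) :
    ∑ i ∈ Finset.range (n+1), g (i : ZMod (n+1)) = ∑ d : ZMod (n+1), g d := by
  refine Finset.sum_nbij' (fun i => (i : ZMod (n+1))) (fun d => d.val) ?_ ?_ ?_ ?_ ?_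
  · intro i _; exact mem_univ _
  · intro d _; exact Finset.mem_range.2 (ZMod.val_lt d)
  · intro i hi; exact ZMod.val_cast_of_lt (Finset.mem_range.1 hi)
  · intro d _; exact ZMod.natCast_zmod_val d
  · intro i _; rfl

lemma Ssum_add_period (a : Fin n → ZMod (n+1)) (u : ℕ) :
    Ssum a (u + (n+1)) = Ssum a u + n := by
  have h := Finset.sum_range_add (fun v => mcount a (v : ZMod (n+1))) u (n+1)
  rw [Ssum, h]
  congr 1
  have : ∀ i ∈ Finset.range (n+1),
      mcount a ((u + i : ℕ) : ZMod (n+1))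
        = (fun d => mcount a ((u : ZMod (n+1)) + d)) (i : ZMod (n+1)) := by
    intro i _; push_cast; ring_nf
  rw [Finset.sum_congr rfl this, sum_range_zmod (fun d => mcount a ((u : ZMod (n+1)) + d))]
  exact (Fintype.sum_equiv (Equiv.addLeft (u : ZMod (n+1))) _ (mcount a) (fun d => rfl)).trans
    (sum_mcount a)

/-- The count of indices whose shifted value is `≤ t`, via prefix sums. -/
lemma count_shift (a : Fin n → ZMod (n+1)) (b t : ℕ) (ht : t ≤ n) :
    Ssum a b + (univ.filter fun j => (a j - (b : ZMod (n+1))).val ≤ t).card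
      = Ssum a (b + (t+1)) := by
  have key : (univ.filter fun j => (a j - (b : ZMod (n+1))).val ≤ t).card
      = ∑ v ∈ Finset.range (t+1), mcount a ((b + v : ℕ) : ZMod (n+1)) := by
    have hmaps : ∀ j ∈ (univ.filter fun j => (a j - (b : ZMod (n+1))).val ≤ t),
        (a j - (b : ZMod (n+1))).val ∈ Finset.range (t+1) := by
      intro j hj
      simp only [mem_filter] at hj
      exact Finset.mem_range.2 (Nat.lt_succ_of_le hj.2)
    rw [Finset.card_eq_sum_card_fiberwise hmaps]
    refine Finset.sum_congr rfl fun v hv => ?_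
    have hv' : v < t + 1 := Finset.mem_range.1 hv
    rw [Finset.filter_filter]
    congr 1
    apply Finset.filter_congr
    intro j _
    constructor
    · rintro ⟨-, h2⟩
      have : a j - (b : ZMod (n+1)) = (v : ZMod (n+1)) := by
        rw [← h2]; exact (ZMod.natCast_zmod_val _).symm
      have := sub_eq_iff_eq_add.1 this
      rw [this]; push_cast; ring
    · intro h
      have : a j - (b : ZMod (n+1)) = (v : ZMod (n+1)) := by
        rw [h]; push_cast; ring
      have hval : (a j - (b : ZMod (n+1))).val = v := by
        rw [this]; exact ZMod.val_cast_of_lt (lt_of_lt_of_le hv' (by omega))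
      exact ⟨by omega, hval⟩
  rw [key]
  exact (Finset.sum_range_add (fun v => mcount a (v : ZMod (n+1))) b (t+1)).symm

/-- The walk of Pollak's circular argument. -/
def T (a : Fin n → ZMod (n+1)) (u : ℕ) : ℤ := (Ssum a u : ℤ) - u

lemma T_period (a : Fin n → ZMod (n+1)) (u : ℕ) : T a (u + (n+1)) = T a u - 1 := by
  simp only [T, Ssum_add_period]; push_cast; ring

def Good (a : Fin n → ZMod (n+1)) (b : ℕ) : Prop :=
  ∀ u, b < u → u ≤ b + n → T a b ≤ T a u

lemma exists_unique_good (a : Fin n → ZMod (n+1)) :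
    ∃ b, b < n+1 ∧ Good a b ∧ ∀ b', b' < n+1 → Good a b' → b' = b := by
  have hQ : ∃ b, b < n+1 ∧ ∀ u < n+1, T a b ≤ T a u := by
    obtain ⟨b, hb, hmin⟩ := Finset.exists_min_image (Finset.range (n+1)) (T a)
      ⟨0, Finset.mem_range.2 (Nat.succ_pos n)⟩
    exact ⟨b, Finset.mem_range.1 hb, fun u hu => hmin u (Finset.mem_range.2 hu)⟩
  classical
  set b := Nat.find hQ with hbdef
  obtain ⟨hblt, hbmin⟩ := Nat.find_spec hQ
  have hfirst : ∀ w, w < b → T a b < T a w := by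
    intro w hw
    have hnot := Nat.find_min hQ hw
    push_neg at hnot
    obtain ⟨u', hu', hlt⟩ := hnot (lt_trans hw hblt)
    exact lt_of_le_of_lt (hbmin u' hu') hlt
  have hgood : Good a b := by
    intro u hu1 hu2
    by_cases hcase : u < n+1
    · exact hbmin u hcase
    · push_neg at hcase
      have hw : u - (n+1) < b := by omega
      have : u = (u - (n+1)) + (n+1) := by omega
      rw [this, T_period]
      have := hfirst _ hw
      omega
  refine ⟨b, hblt, hgood, ?_⟩
  intro b' hb' hgood'
  by_contra hne
  have key : ∀ b1 b2, b1 < b2 → b2 < n+1 → Good a b1 → Good a b2 → False := by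
    intro b1 b2 h12 h2lt hg1 hg2
    have hA : T a b1 ≤ T a b2 := hg1 b2 h12 (by omega)
    have hB : T a b2 ≤ T a (b1 + (n+1)) := hg2 (b1 + (n+1)) (by omega) (by omega)
    rw [T_period] at hB
    omega
  rcases lt_or_gt_of_ne hne with h | h
  · exact key b' b h hblt hgood' hgood
  · exact key b b' h hb' hgood hgood'

/-- The parking condition on `ZMod (n+1)`-valued functions. -/
def IsPF' (a : Fin n → ZMod (n+1)) : Prop :=
  ∀ t < n, t + 1 ≤ (univ.filter fun j => (a j).val ≤ t).card

lemma shift_iff (a : Fin n → ZMod (n+1)) (b : ℕ) :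
    IsPF' (fun j => a j - (b : ZMod (n+1))) ↔ Good a b := by
  constructor
  · intro h u hu1 hu2
    set t := u - b - 1 with htdef
    have ht : t < n := by omega
    have hu : u = b + (t+1) := by omega
    have hcnt := count_shift a b t (le_of_lt ht)
    have hc := h t ht
    simp only [T, hu]
    simp only at hc
    omega
  · intro h t ht
    have hcnt := count_shift a b t (le_of_lt ht)
    have := h (b + (t+1)) (by omega) (by omega)
    simp only [T] at this
    simp only
    omega

lemma exists_unique_shift (a : Fin n → ZMod (n+1)) :
    ∃! c : ZMod (n+1), IsPF' (fun j => a j + c) := by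
  obtain ⟨b, hblt, hgood, huniq⟩ := exists_unique_good a
  refine ⟨-(b : ZMod (n+1)), ?_, ?_⟩
  · have := (shift_iff a b).2 hgood
    simpa [sub_eq_add_neg] using this
  · intro c hc
    set b' := (-c).val with hb'def
    have hb'lt : b' < n+1 := ZMod.val_lt _
    have hcast : (b' : ZMod (n+1)) = -c := ZMod.natCast_zmod_val _
    have : IsPF' (fun j => a j - (b' : ZMod (n+1))) := by
      rw [hcast]; simpa [sub_eq_add_neg] using hc
    have hg' := (shift_iff a b').1 this
    have := huniq b' hb'lt hg'
    rw [← this, hcast, neg_neg]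

lemma card_IsPF'_mul : Nat.card {a : Fin n → ZMod (n+1) // IsPF' a} * (n+1) = (n+1)^n := by
  classical
  have hbij : Function.Bijective
      (fun p : {a : Fin n → ZMod (n+1) // IsPF' a} × ZMod (n+1) =>
        (fun j => p.1.1 j + p.2 : Fin n → ZMod (n+1))) := by
    constructor
    · rintro ⟨⟨a, ha⟩, c⟩ ⟨⟨a', ha'⟩, c'⟩ hEq
      simp only at hEq
      have h1 : IsPF' (fun j => (a j + c) + (-c)) := by
        simpa [add_neg_cancel_right] using ha
      have h2 : IsPF' (fun j => (a j + c) + (-c')) := by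
        have heq2 : (fun j => (a j + c) + (-c')) = a' := by
          funext j
          have h := congrFun hEq j
          rw [h]
          exact add_neg_cancel_right _ _
        rw [heq2]; exact ha'
      obtain ⟨c₀, -, hun⟩ := exists_unique_shift (fun j => a j + c)
      have hcc : -c = -c' := (hun _ h1).trans (hun _ h2).symm
      have hcc' : c = c' := neg_injective hcc
      have haa : a = a' := by
        funext j
        have h := congrFun hEq j
        rw [hcc'] at h
        exact add_right_cancel h
      subst hcc'; subst haa; rfl
    · intro g
      obtain ⟨c₀, hc₀, -⟩ := exists_unique_shift g
      refine ⟨⟨⟨fun j => g j + c₀, hc₀⟩, -c₀⟩, ?_⟩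
      funext j; simp
  have := Nat.card_eq_of_bijective _ hbij
  rw [Nat.card_prod, Nat.card_zmod] at this
  rw [this]
  simp [Nat.card_eq_fintype_card, Fintype.card_fun]

end PFaux

/-- A classical parking function of length `n`: a sequence of positive integers whose
increasing rearrangement `(b_1, …, b_n)` satisfies `b_i ≤ i`; equivalently, for each `i`,
at least `i + 1` of the values are `≤ i + 1` (with `i` ranging over `Fin n`). -/
def IsParkingFunction (n : ℕ) (f : Fin n → ℕ+) : Prop :=
  ∀ i : Fin n, (i : ℕ) + 1 ≤ (Finset.univ.filter fun j => (f j : ℕ) ≤ (i : ℕ) + 1).card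

namespace PFaux

lemma card_pf_eq (n : ℕ) :
    Nat.card {a : Fin n → ZMod (n+1) // IsPF' a}
      = Nat.card {f : Fin n → ℕ+ // IsParkingFunction n f} := by
  classical
  refine Nat.card_eq_of_bijective
    (fun a => ⟨fun j => ⟨(a.1 j).val + 1, Nat.succ_pos _⟩, ?_⟩) ⟨?_, ?_⟩
  · intro i
    have h := a.2 (i : ℕ) i.isLt
    have : (univ.filter fun j => ((a.1 j).val + 1 : ℕ) ≤ (i : ℕ) + 1)
        = (univ.filter fun j => (a.1 j).val ≤ (i : ℕ)) := by
      apply Finset.filter_congr; intro j _; constructor <;> intro h' <;> omega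
    simpa [this] using h
  · rintro ⟨a, ha⟩ ⟨a', ha'⟩ hEq
    simp only [Subtype.mk.injEq] at hEq ⊢
    funext j
    have h := congrFun (congrArg Subtype.val hEq) j
    have h2 : (a j).val + 1 = (a' j).val + 1 := congrArg (fun p : ℕ+ => (p : ℕ)) h
    exact ZMod.val_injective _ (by omega)
  · rintro ⟨f, hf⟩
    have hle : ∀ j, (f j : ℕ) ≤ n := by
      intro j
      have hn : 1 ≤ n := by have := j.isLt; omega
      have h := hf ⟨n - 1, by omega⟩
      simp only at h
      have h' : n ≤ (univ.filter fun j' => (f j' : ℕ) ≤ (n - 1) + 1).card := by omega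
      have hcard : (univ.filter fun j' => (f j' : ℕ) ≤ (n - 1) + 1).card = Fintype.card (Fin n) := by
        have := Finset.card_filter_le (univ : Finset (Fin n)) (fun j' => (f j' : ℕ) ≤ (n - 1) + 1)
        simp only [Finset.card_univ, Fintype.card_fin] at this ⊢
        omega
      have huniv := Finset.eq_univ_of_card _ hcard
      have hj : j ∈ (univ.filter fun j' => (f j' : ℕ) ≤ (n - 1) + 1) := by rw [huniv]; exact mem_univ j
      have := (Finset.mem_filter.1 hj).2
      omega
    set a : Fin n → ZMod (n+1) := fun j => (((f j : ℕ) - 1 : ℕ) : ZMod (n+1)) with hadef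
    have hval : ∀ j, (a j).val = (f j : ℕ) - 1 := by
      intro j
      exact ZMod.val_cast_of_lt (by have := hle j; omega)
    have hIsPF' : IsPF' a := by
      intro t ht
      have h := hf ⟨t, ht⟩
      simp only at h
      have : (univ.filter fun j => (a j).val ≤ t)
          = (univ.filter fun j => (f j : ℕ) ≤ t + 1) := by
        apply Finset.filter_congr; intro j _
        rw [hval j]
        have := (f j).pos
        constructor <;> intro h' <;> omega
      rw [this]
      exact h
    refine ⟨⟨a, hIsPF'⟩, ?_⟩
    apply Subtype.ext
    funext j
    apply PNat.coe_injective
    simp only [PNat.mk_coe]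
    rw [hval j]
    have := (f j).pos
    omega

end PFaux

/-- The number of classical parking functions of length `n` is `(n+1)^(n-1)`. -/
theorem card_parkingFunctions (n : ℕ) :
    Nat.card {f : Fin n → ℕ+ // IsParkingFunction n f} = (n + 1) ^ (n - 1) := by
  have h1 := PFaux.card_IsPF'_mul (n := n)
  rw [PFaux.card_pf_eq n] at h1
  have hpow : (n+1)^n = (n+1)^(n-1) * (n+1) := by
    rcases n with _ | m
    · rfl
    · rw [Nat.succ_sub_one, pow_succ]
  exact Nat.eq_of_mul_eq_mul_right (Nat.succ_pos n) (h1.trans hpow)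
end

section
/- For every positive integer k, the number of classical k-parking functions of length n, i.e. sequences of positive integers whose increasing rearrangement (b_1,...,b_n) satisfies b_i ≤ (i-1)k+1, equals (kn+1)^(n-1). -/
/-- A classical `k`-parking function of length `n`: a sequence of positive integers whose
increasing rearrangement `(b_1, …, b_n)` satisfies `b_i ≤ (i-1)k + 1`; equivalently, for each
`i : Fin n`, at least `i + 1` of the values are `≤ i·k + 1`. -/
def IsKParkingFunction (n k : ℕ) (f : Fin n → ℕ+) : Prop :=
  ∀ i : Fin n, (i : ℕ) + 1 ≤ (Finset.univ.filter fun j => (f j : ℕ) ≤ (i : ℕ) * k + 1).card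

namespace KPark

lemma cycle_lemma (m : ℕ) (hm : 0 < m) (W : ℕ → ℤ) (hW : ∀ t, W (t + m) = W t - 1) :
    ∃! c, c < m ∧ ∀ t, t < m → W c ≤ W (c + t) := by
  classical
  have key : ∀ a b, a < m → b < m → a < b → (∀ t, t < m → W a ≤ W (a + t)) →
      (∀ t, t < m → W b ≤ W (b + t)) → False := by
    intro a b ham hbm hab hga hgb
    have h1 : W a ≤ W b := by
      have := hga (b - a) (by omega)
      have e : a + (b - a) = b := by omega
      rwa [e] at this
    have h2 : W b ≤ W (a + m) := by
      have := hgb (a + m - b) (by omega)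
      have e : b + (a + m - b) = a + m := by omega
      rwa [e] at this
    rw [hW] at h2
    omega
  set I := (Finset.range m).filter (fun t => ∀ u ∈ Finset.range m, W t ≤ W u) with hI
  have hne : I.Nonempty := by
    obtain ⟨c, hc, hmin⟩ := Finset.exists_min_image (Finset.range m) W ⟨0, Finset.mem_range.2 hm⟩
    exact ⟨c, Finset.mem_filter.2 ⟨hc, hmin⟩⟩
  set c := I.min' hne with hc
  have hcI : c ∈ I := Finset.min'_mem _ _
  have hcm : c < m := Finset.mem_range.1 (Finset.mem_filter.1 hcI).1
  have hcmin : ∀ u ∈ Finset.range m, W c ≤ W u := (Finset.mem_filter.1 hcI).2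
  have hlt : ∀ u, u < c → W c + 1 ≤ W u := by
    intro u hu
    have hum : u ∈ Finset.range m := Finset.mem_range.2 (hu.trans hcm)
    have h1 : W c ≤ W u := hcmin u hum
    rcases lt_or_eq_of_le h1 with h | h
    · omega
    · exfalso
      have huI : u ∈ I := Finset.mem_filter.2 ⟨hum, fun v hv => h ▸ hcmin v hv⟩
      have := Finset.min'_le I u huI
      omega
  have hgood : ∀ t, t < m → W c ≤ W (c + t) := by
    intro t ht
    by_cases h : c + t < m
    · exact hcmin _ (Finset.mem_range.2 h)
    · have h1 : c + t = (c + t - m) + m := by omega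
      have h2 : c + t - m < c := by omega
      have h3 := hlt _ h2
      rw [h1, hW]
      omega
  refine ⟨c, ⟨hcm, hgood⟩, ?_⟩
  rintro d ⟨hdm, hdgood⟩
  rcases Nat.lt_trichotomy d c with h | h | h
  · exact absurd (key d c hdm hcm h hdgood hgood) (by simp)
  · exact h
  · exact absurd (key c d hcm hdm h hgood hdgood) (by simp)

open Finset

variable {n m : ℕ}

/-- number of `u < t` whose residue mod `m` hits `w j`, summed over `j`. -/
def cnt (m : ℕ) (w : Fin n → ZMod m) (t : ℕ) : ℕ :=
  ∑ j, ((Finset.range t).filter (fun u : ℕ => ((u : ZMod m)) = w j)).card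

lemma card_Ico_filter_eq [NeZero m] (t : ℕ) (x : ZMod m) :
    ((Finset.Ico t (t + m)).filter (fun u : ℕ => ((u : ZMod m)) = x)).card = 1 := by
  have hm : 0 < m := Nat.pos_of_ne_zero (NeZero.ne m)
  have : ((Finset.Ico t (t + m)).filter (fun u : ℕ => ((u : ZMod m)) = x)) = {t + (x - (t : ZMod m)).val} := by
    ext u
    simp only [Finset.mem_filter, Finset.mem_Ico, Finset.mem_singleton]
    constructor
    · rintro ⟨⟨h1, h2⟩, h3⟩
      have hv : ((u - t : ℕ) : ZMod m) = x - t := by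
        push_cast [Nat.cast_sub h1]
        rw [h3]
      have : (u - t) < m := by omega
      have := ZMod.val_cast_of_lt this
      rw [hv] at this
      omega
    · rintro rfl
      refine ⟨⟨by omega, by have := ZMod.val_lt (x - (t : ZMod m)); omega⟩, ?_⟩
      push_cast [ZMod.natCast_val, ZMod.cast_id]
      ring
  rw [this, Finset.card_singleton]

lemma cnt_add [NeZero m] (w : Fin n → ZMod m) (t : ℕ) :
    cnt m w (t + m) = cnt m w t + n := by
  unfold cnt
  have : ∀ j : Fin n, ((Finset.range (t + m)).filter (fun u : ℕ => ((u : ZMod m)) = w j)).card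
      = ((Finset.range t).filter (fun u : ℕ => ((u : ZMod m)) = w j)).card + 1 := by
    intro j
    rw [Finset.range_eq_Ico, ← Finset.Ico_union_Ico_eq_Ico (Nat.zero_le t) (Nat.le_add_right t m),
      Finset.filter_union, Finset.card_union_of_disjoint]
    · rw [← Finset.range_eq_Ico, card_Ico_filter_eq]
    · exact Finset.disjoint_filter_filter (Finset.Ico_disjoint_Ico_consecutive 0 t (t + m))
  simp only [this, Finset.sum_add_distrib, Finset.sum_const, Finset.card_univ, Fintype.card_fin,
    smul_eq_mul, mul_one]

lemma cnt_shift [NeZero m] (w : Fin n → ZMod m) (c : ZMod m) (t : ℕ) :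
    cnt m w (c.val + t) = cnt m w c.val + cnt m (fun j => w j - c) t := by
  unfold cnt
  rw [← Finset.sum_add_distrib]
  refine Finset.sum_congr rfl fun j _ => ?_
  rw [Finset.range_eq_Ico, ← Finset.Ico_union_Ico_eq_Ico (Nat.zero_le c.val) (Nat.le_add_right _ t),
    Finset.filter_union, Finset.card_union_of_disjoint
      (Finset.disjoint_filter_filter (Finset.Ico_disjoint_Ico_consecutive 0 c.val (c.val + t))),
    ← Finset.range_eq_Ico]
  congr 1
  -- card over Ico c.val (c.val+t) of (↑u = w j)  =  card over range t of (↑u = w j - c)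
  have hmap : Finset.Ico c.val (c.val + t)
      = Finset.map (addLeftEmbedding c.val) (Finset.Ico 0 t) := by
    rw [Finset.map_add_left_Ico]
    simp
  rw [hmap, Finset.filter_map, Finset.card_map, ← Finset.range_eq_Ico]
  congr 1
  refine Finset.filter_congr fun u hu => ?_
  simp only [Function.comp_apply, addLeftEmbedding_apply]
  push_cast [ZMod.natCast_val, ZMod.cast_id]
  rw [eq_sub_iff_add_eq, add_comm]
lemma isK_iff {n k : ℕ} (hk : 1 ≤ k) (f : Fin n → ℕ+) :
    IsKParkingFunction n k f ↔
      ∀ ℓ, 1 ≤ ℓ → ℓ ≤ k * n →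
        ℓ ≤ k * (Finset.univ.filter fun j => (f j : ℕ) ≤ ℓ).card := by
  constructor
  · intro h ℓ h1 h2
    have hkpos : 0 < k := hk
    obtain ⟨i, r, hir, hrk, hin⟩ : ∃ i r, ℓ - 1 = k * i + r ∧ r < k ∧ i < n := by
      refine ⟨(ℓ - 1) / k, (ℓ - 1) % k, (Nat.div_add_mod (ℓ - 1) k).symm,
        Nat.mod_lt _ hkpos, ?_⟩
      rw [Nat.div_lt_iff_lt_mul hkpos]
      have := Nat.mul_comm n k
      omega
    have hik : i * k + 1 ≤ ℓ := by
      have := Nat.mul_comm i k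
      omega
    have hcard := h ⟨i, hin⟩
    simp only [Fin.val_mk] at hcard
    have hmono : (Finset.univ.filter fun j => (f j : ℕ) ≤ i * k + 1).card ≤
        (Finset.univ.filter fun j => (f j : ℕ) ≤ ℓ).card := by
      apply Finset.card_le_card
      exact Finset.monotone_filter_right _ fun j hj => by omega
    have h5 : k * (i + 1) ≤ k * (Finset.univ.filter fun j => (f j : ℕ) ≤ ℓ).card :=
      Nat.mul_le_mul_left k (by omega)
    have h6 : k * (i + 1) = k * i + k := by ring
    omega
  · intro h i
    have hn1 : 1 ≤ n := i.pos
    obtain ⟨n', rfl⟩ : ∃ n', n = n' + 1 := ⟨n - 1, by omega⟩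
    have h1 : 1 ≤ (i : ℕ) * k + 1 := by omega
    have h2 : (i : ℕ) * k + 1 ≤ k * (n' + 1) := by
      have hi' : (i : ℕ) ≤ n' := by have := i.2; omega
      have := Nat.mul_le_mul_right k hi'
      have : k * (n' + 1) = n' * k + k := by ring
      omega
    have h3 := h _ h1 h2
    by_contra hc
    push_neg at hc
    have h4 : (Finset.univ.filter fun j => (f j : ℕ) ≤ (i : ℕ) * k + 1).card ≤ (i : ℕ) := by omega
    have h5 := Nat.mul_le_mul_left k h4
    have h6 : k * (i : ℕ) = (i : ℕ) * k := by ring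
    omega
lemma cnt_small {n m : ℕ} [NeZero m] (w : Fin n → ZMod m) (t : ℕ) (ht : t ≤ m) :
    cnt m w t = (Finset.univ.filter fun j => (w j).val < t).card := by
  unfold cnt
  rw [Finset.card_filter]
  refine Finset.sum_congr rfl fun j _ => ?_
  by_cases h : (w j).val < t
  · rw [if_pos h]
    have he : (Finset.range t).filter (fun u : ℕ => ((u : ZMod m)) = w j) = {(w j).val} := by
      ext u
      simp only [Finset.mem_filter, Finset.mem_range, Finset.mem_singleton]
      constructor
      · rintro ⟨h1, h2⟩
        have h3 := ZMod.val_cast_of_lt (show u < m by omega)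
        rw [h2] at h3
        omega
      · rintro rfl
        exact ⟨h, by simp [ZMod.natCast_val, ZMod.cast_id]⟩
    rw [he, Finset.card_singleton]
  · rw [if_neg h, Finset.card_eq_zero, Finset.filter_eq_empty_iff]
    intro u hu hc
    have hu' := Finset.mem_range.1 hu
    have h3 := ZMod.val_cast_of_lt (show u < m by omega)
    rw [hc] at h3
    omega


lemma all_le_of_isK {n k : ℕ} (f : Fin n → ℕ+) (h : IsKParkingFunction n k f) (j : Fin n) :
    (f j : ℕ) ≤ (n - 1) * k + 1 := by
  have hn : 1 ≤ n := j.pos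
  have hc := h ⟨n - 1, by omega⟩
  simp only [Fin.val_mk] at hc
  have hle : (Finset.univ.filter fun j => (f j : ℕ) ≤ (n - 1) * k + 1).card ≤ n := by
    simpa using Finset.card_le_univ (Finset.univ.filter fun j => (f j : ℕ) ≤ (n - 1) * k + 1)
  have hcard : (Finset.univ.filter fun j => (f j : ℕ) ≤ (n - 1) * k + 1).card
      = Fintype.card (Fin n) := by simp [Fintype.card_fin]; omega
  have huniv := Finset.eq_univ_of_card _ hcard
  have hmem : j ∈ Finset.univ.filter fun j => (f j : ℕ) ≤ (n - 1) * k + 1 := by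
    rw [huniv]; exact Finset.mem_univ j
  exact (Finset.mem_filter.1 hmem).2

/-- The walk. -/
def Wf (k m : ℕ) {n : ℕ} (w : Fin n → ZMod m) (t : ℕ) : ℤ := k * cnt m w t - t

lemma Wf_add {n k : ℕ} (w : Fin n → ZMod (k * n + 1)) (t : ℕ) :
    Wf k (k * n + 1) w (t + (k * n + 1)) = Wf k (k * n + 1) w t - 1 := by
  haveI : NeZero (k * n + 1) := ⟨by omega⟩
  unfold Wf
  rw [cnt_add]
  push_cast
  ring

lemma Wf_shift {n m : ℕ} [NeZero m] (w : Fin n → ZMod m) (c : ZMod m) (t : ℕ) :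
    Wf k m (fun j => w j - c) t = Wf k m w (c.val + t) - Wf k m w c.val := by
  unfold Wf
  rw [cnt_shift]
  push_cast
  ring

/-- The parking property for a `ZMod`-valued tuple. -/
def Park (k : ℕ) {n m : ℕ} (w : Fin n → ZMod m) : Prop :=
  ∀ t, t < m → 0 ≤ Wf k m w t

/-- `fOf w` turns a `ZMod m`-tuple into a tuple of positive integers. -/
def fOf {n m : ℕ} (w : Fin n → ZMod m) : Fin n → ℕ+ :=
  fun j => ⟨(w j).val + 1, Nat.succ_pos _⟩

lemma park_iff_isK {n k : ℕ} (hk : 1 ≤ k) (w : Fin n → ZMod (k * n + 1)) :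
    Park k w ↔ IsKParkingFunction n k (fOf w) := by
  haveI : NeZero (k * n + 1) := ⟨by omega⟩
  rw [isK_iff hk]
  constructor
  · intro h ℓ h1 h2
    have h3 := h ℓ (by omega)
    unfold Wf at h3
    rw [cnt_small w ℓ (by omega)] at h3
    have : (Finset.univ.filter fun j => ((w j).val < ℓ)) =
        (Finset.univ.filter fun j => ((fOf w j : ℕ) ≤ ℓ)) := by
      refine Finset.filter_congr fun j _ => ?_
      simp [fOf]
    rw [this] at h3
    omega
  · intro h t ht
    unfold Wf
    rw [cnt_small w t (by omega)]
    rcases Nat.eq_zero_or_pos t with rfl | h1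
    · simp
    have h3 := h t h1 (by omega)
    have : (Finset.univ.filter fun j => ((fOf w j : ℕ) ≤ t)) =
        (Finset.univ.filter fun j => ((w j).val < t)) := by
      refine Finset.filter_congr fun j _ => ?_
      simp [fOf]
    rw [this] at h3
    omega

lemma exists_unique_good {n k : ℕ} (hk : 1 ≤ k) (hn : 1 ≤ n)
    (w : Fin n → ZMod (k * n + 1)) :
    ∃! c : ZMod (k * n + 1), Park k (fun j => w j - c) := by
  haveI : NeZero (k * n + 1) := ⟨by omega⟩
  obtain ⟨c', ⟨hc'm, hgood⟩, huniq⟩ :=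
    cycle_lemma (k * n + 1) (by omega) (Wf k (k * n + 1) w) (fun t => Wf_add w t)
  have hval : ((c' : ZMod (k * n + 1))).val = c' := ZMod.val_cast_of_lt hc'm
  refine ⟨(c' : ZMod (k * n + 1)), ?_, ?_⟩
  · intro t ht
    rw [Wf_shift, hval]
    have := hgood t ht
    omega
  · intro d hd
    have hgd : d.val < k * n + 1 ∧ ∀ t, t < k * n + 1 →
        Wf k (k * n + 1) w d.val ≤ Wf k (k * n + 1) w (d.val + t) := by
      refine ⟨ZMod.val_lt d, fun t ht => ?_⟩
      have := hd t ht
      rw [Wf_shift] at this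
      omega
    have h9 := huniq d.val hgd
    rw [← h9]
    exact (ZMod.natCast_rightInverse d).symm


lemma wOf_spec {n k : ℕ} (f : Fin n → ℕ+) (hf : IsKParkingFunction n k f) :
    fOf (fun j => (((f j : ℕ) - 1 : ℕ) : ZMod (k * n + 1))) = f := by
  haveI : NeZero (k * n + 1) := ⟨by omega⟩
  funext j
  have h1 := all_le_of_isK f hf j
  have hn : 1 ≤ n := j.pos
  have h2 : (n - 1) * k ≤ k * n := by
    have ha := Nat.mul_le_mul_right k (show n - 1 ≤ n by omega)
    have hb := Nat.mul_comm n k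
    omega
  have h3 : (f j : ℕ) - 1 < k * n + 1 := by omega
  have h4 := ZMod.val_cast_of_lt h3
  have h5 : 1 ≤ (f j : ℕ) := (f j).2
  have h6 : ((fOf (fun j => (((f j : ℕ) - 1 : ℕ) : ZMod (k * n + 1))) j : ℕ)) = (f j : ℕ) := by
    simp only [fOf, PNat.mk_coe, h4]
    omega
  exact PNat.coe_injective h6

/-- The subtype of parking `ZMod`-tuples is equivalent to the theorem's subtype. -/
def parkEquiv {n k : ℕ} (hk : 1 ≤ k) :
    {f : Fin n → ℕ+ // IsKParkingFunction n k f} ≃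
      {w : Fin n → ZMod (k * n + 1) // Park k w} where
  toFun f := ⟨fun j => (((f.1 j : ℕ) - 1 : ℕ) : ZMod (k * n + 1)),
    (park_iff_isK hk _).2 (by rw [wOf_spec f.1 f.2]; exact f.2)⟩
  invFun w := ⟨fOf w.1, (park_iff_isK hk w.1).1 w.2⟩
  left_inv f := Subtype.ext (wOf_spec f.1 f.2)
  right_inv w := by
    haveI : NeZero (k * n + 1) := ⟨by omega⟩
    refine Subtype.ext (funext fun j => ?_)
    show ((((fOf w.1 j : ℕ) - 1 : ℕ) : ZMod (k * n + 1))) = w.1 j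
    simp only [fOf, PNat.mk_coe, Nat.add_sub_cancel]
    exact ZMod.natCast_rightInverse (w.1 j)

end KPark

open KPark in
/-- The number of classical `k`-parking functions of length `n` is `(kn+1)^(n-1)`. -/
theorem card_kParkingFunctions (n k : ℕ) (hk : 1 ≤ k) :
    Nat.card {f : Fin n → ℕ+ // IsKParkingFunction n k f} = (k * n + 1) ^ (n - 1) := by
  rcases Nat.eq_zero_or_pos n with rfl | hn
  · haveI : Unique {f : Fin 0 → ℕ+ // IsKParkingFunction 0 k f} :=
      ⟨⟨⟨fun i => i.elim0, fun i => i.elim0⟩⟩, fun f => Subtype.ext (funext fun i => i.elim0)⟩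
    simp
  · haveI : NeZero (k * n + 1) := ⟨by omega⟩
    have hbij : Function.Bijective
        (fun p : ZMod (k * n + 1) × {w : Fin n → ZMod (k * n + 1) // Park k w} =>
          (fun j => p.2.1 j + p.1 : Fin n → ZMod (k * n + 1))) := by
      constructor
      · rintro ⟨c, p, hp⟩ ⟨c', p', hp'⟩ hE
        simp only at hE
        have h1 : Park k (fun j => (fun j => p j + c) j - c) := by simpa using hp
        have h2 : Park k (fun j => (fun j => p j + c) j - c') := by
          rw [hE]; simpa using hp'
        obtain ⟨c₀, hc₀, huniq⟩ := exists_unique_good hk hn (fun j => p j + c)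
        have hcc : c = c' := (huniq c h1).trans (huniq c' h2).symm
        subst hcc
        have hpp : p = p' := by
          funext j
          have := congrFun hE j
          simpa using this
        simp [hpp]
      · intro w
        obtain ⟨c, hc, -⟩ := exists_unique_good hk hn w
        exact ⟨⟨c, ⟨fun j => w j - c, hc⟩⟩, by funext j; simp⟩
    have hEq := Nat.card_congr (Equiv.ofBijective _ hbij)
    rw [Nat.card_prod, Nat.card_zmod] at hEq
    have hfun : Nat.card (Fin n → ZMod (k * n + 1)) = (k * n + 1) ^ n := by
      rw [Nat.card_fun, Nat.card_zmod, Nat.card_eq_fintype_card, Fintype.card_fin]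
    rw [hfun] at hEq
    have hPE : Nat.card {f : Fin n → ℕ+ // IsKParkingFunction n k f}
        = Nat.card {w : Fin n → ZMod (k * n + 1) // Park k w} :=
      Nat.card_congr (parkEquiv hk)
    have hpow : (k * n + 1) ^ n = (k * n + 1) * (k * n + 1) ^ (n - 1) := by
      obtain ⟨n', rfl⟩ : ∃ n', n = n' + 1 := ⟨n - 1, by omega⟩
      rw [Nat.add_sub_cancel, pow_succ, mul_comm]
    rw [hpow] at hEq
    rw [hPE]
    exact Nat.eq_of_mul_eq_mul_left (by omega) hEq
end

section
/- The number of type A_{n-1} noncrossing parking functions, i.e. pairs consisting of a noncrossing partition {B_1,...,B_r} of [n] together with a set partition {L_1,...,L_r} of [n] with |B_i| = |L_i| for each i (where the L_i are assigned to the blocks B_i), equals (n+1)^(n-1). -/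
open Finset

def IsNoncrossing (n : ℕ) (π : Finpartition (Finset.univ : Finset (Fin n))) : Prop :=
  ∀ a b c d : Fin n, a < b → b < c → c < d →
    ∀ B ∈ π.parts, ∀ B' ∈ π.parts, a ∈ B → c ∈ B → b ∈ B' → d ∈ B' → B = B'


namespace NCPFproof

variable {n : ℕ}

/-- number of `j` with `a ≤ f j < b`. -/
def icnt (f : Fin n → Fin n) (a b : ℕ) : ℕ :=
  (univ.filter fun j => a ≤ (f j).val ∧ (f j).val < b).card

lemma icnt_add (f : Fin n → Fin n) {a b c : ℕ} (hab : a ≤ b) (hbc : b ≤ c) :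
    icnt f a b + icnt f b c = icnt f a c := by
  unfold icnt
  rw [← card_union_of_disjoint]
  · congr 1
    ext x
    simp only [mem_union, mem_filter, mem_univ, true_and]
    omega
  · rw [Finset.disjoint_left]
    intro x hx hx'
    simp only [mem_filter, mem_univ, true_and] at hx hx'
    omega

def IsPark (f : Fin n → Fin n) : Prop :=
  ∀ k, k ≤ n → k ≤ (univ.filter fun j => (f j).val < k).card

lemma icnt_zero (f : Fin n → Fin n) (k : ℕ) :
    icnt f 0 k = (univ.filter fun j => (f j).val < k).card := by
  unfold icnt; congr 1; ext x; simp

/-- the defining property of candidate block minima -/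
def pp (f : Fin n → Fin n) (i m : ℕ) : Prop := i + 1 ≤ m + icnt f m (i + 1)

instance (f : Fin n → Fin n) (i m : ℕ) : Decidable (pp f i m) := by
  unfold pp; infer_instance

/-- the min of the block of `i` in the canonical noncrossing partition -/
def rho (f : Fin n → Fin n) (i : ℕ) : ℕ := Nat.findGreatest (pp f i) i

lemma rho_le (f : Fin n → Fin n) (i : ℕ) : rho f i ≤ i := Nat.findGreatest_le i

lemma pp_zero {f : Fin n → Fin n} (hf : IsPark f) {i : ℕ} (hi : i < n) : pp f i 0 := by
  unfold pp
  rw [icnt_zero]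
  simpa using hf (i + 1) hi

lemma rho_spec {f : Fin n → Fin n} (hf : IsPark f) {i : ℕ} (hi : i < n) :
    pp f i (rho f i) := Nat.findGreatest_spec (Nat.zero_le i) (pp_zero hf hi)

lemma rho_max {f : Fin n → Fin n} {i m : ℕ} (h1 : rho f i < m) (h2 : m ≤ i) : ¬ pp f i m :=
  Nat.findGreatest_is_greatest h1 h2

lemma rho_count_pos {f : Fin n → Fin n} (hf : IsPark f) {i : ℕ} (hi : i < n) :
    0 < icnt f (rho f i) (rho f i + 1) := by
  by_contra h
  push_neg at h
  interval_cases h' : icnt f (rho f i) (rho f i + 1)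
  have hs := rho_spec hf hi
  rcases eq_or_lt_of_le (rho_le f i) with he | hlt
  · unfold pp at hs; rw [he] at hs h'
    omega
  · have hadd := icnt_add f (by omega : rho f i ≤ rho f i + 1) (by omega : rho f i + 1 ≤ i + 1)
    have : pp f i (rho f i + 1) := by unfold pp at hs ⊢; omega
    exact rho_max (Nat.lt_succ_self _) hlt this

lemma rho_eq_self {f : Fin n → Fin n} {m : ℕ}
    (hpos : 0 < icnt f m (m + 1)) : rho f m = m :=
  Nat.findGreatest_eq (by unfold pp; omega)

/-- stack discipline / nesting property -/
lemma rho_nest {f : Fin n → Fin n} (hf : IsPark f) {i i' : ℕ} (h : i < i') (hi' : i' < n) :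
    rho f i' ≤ rho f i ∨ i < rho f i' := by
  by_contra hc
  push_neg at hc
  obtain ⟨h1, h2⟩ := hc
  have hnp : ¬ pp f i (rho f i') := rho_max h1 h2
  have hp : pp f i' (rho f i') := rho_spec hf hi'
  have hadd := icnt_add f (by omega : rho f i' ≤ i + 1) (by omega : i + 1 ≤ i' + 1)
  have : pp f i' (i + 1) := by unfold pp at hnp hp ⊢; omega
  have := Nat.le_findGreatest (by omega : i + 1 ≤ i') this
  unfold rho at *
  omega

/-- the fiber of `rho`, i.e. the block with min `m` -/
def fib (f : Fin n → Fin n) (m : ℕ) : Finset (Fin n) :=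
  univ.filter fun j : Fin n => rho f j.val = m

lemma card_fib_le {f : Fin n → Fin n} (hf : IsPark f) (m : ℕ) :
    (fib f m).card ≤ icnt f m (m + 1) := by
  rcases (fib f m).eq_empty_or_nonempty with he | ⟨j0, hj0⟩
  · simp [he]
  have hj0' : rho f j0.val = m := by simpa [fib] using hj0
  have hmpos : 0 < icnt f m (m + 1) := hj0' ▸ rho_count_pos hf j0.isLt
  have hmle : ∀ i : Fin n, i ∈ fib f m → m ≤ i.val := by
    intro i hi
    simp only [fib, mem_filter] at hi
    have := rho_le f i.val
    omega
  -- the "surplus" map, strictly decreasing along the fiber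
  set v : Fin n → ℕ := fun i => m + icnt f m (i.val + 1) - (i.val + 1) with hv
  have key : ∀ i ∈ fib f m, ∀ i' ∈ fib f m, i.val < i'.val → v i' < v i := by
    intro i hi i' hi' hlt
    simp only [fib, mem_filter, mem_univ, true_and] at hi hi'
    have hmi : m ≤ i.val := by have := rho_le f i.val; omega
    have hpi : pp f i.val m := by rw [← hi]; exact rho_spec hf i.isLt
    have hpi' : pp f i'.val m := by rw [← hi']; exact rho_spec hf i'.isLt
    have hnp : ¬ pp f i'.val (i.val + 1) := rho_max (by omega) (by omega)
    have hadd := icnt_add f (by omega : m ≤ i.val + 1) (by omega : i.val + 1 ≤ i'.val + 1)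
    unfold pp at hpi hpi' hnp
    simp only [hv]
    omega
  have hrange : ∀ i ∈ fib f m, v i ∈ range (icnt f m (m + 1)) := by
    intro i hi
    have hmi := hmle i hi
    simp only [fib, mem_filter, mem_univ, true_and] at hi
    rw [mem_range]
    rcases eq_or_lt_of_le hmi with he | hlt
    · have : icnt f m (i.val + 1) = icnt f m (m + 1) := by rw [← he]
      simp only [hv, this, ← he]
      omega
    · have hpi : pp f i.val m := by rw [← hi]; exact rho_spec hf i.isLt
      have hnp : ¬ pp f i.val (m + 1) := rho_max (by omega) (by omega)
      have hadd := icnt_add f (by omega : m ≤ m + 1) (by omega : m + 1 ≤ i.val + 1)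
      unfold pp at hpi hnp
      simp only [hv]
      omega
  calc (fib f m).card ≤ (range (icnt f m (m + 1))).card := by
        apply card_le_card_of_injOn v hrange
        intro a ha b hb hab
        rcases lt_trichotomy a.val b.val with h | h | h
        · exact absurd hab (by have := key a ha b hb h; omega)
        · exact Fin.ext h
        · exact absurd hab (by have := key b hb a ha h; omega)
    _ = icnt f m (m + 1) := card_range _

lemma icnt_single (f : Fin n → Fin n) (m : ℕ) :
    icnt f m (m + 1) = (univ.filter fun j => (f j).val = m).card := by
  unfold icnt; congr 1; ext x; simp only [mem_filter, mem_univ, true_and]; omega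

lemma card_fib {f : Fin n → Fin n} (hf : IsPark f) (m : ℕ) (hm : m < n) :
    (fib f m).card = icnt f m (m + 1) := by
  have hsum1 : ∑ m ∈ range n, (fib f m).card = n := by
    have h := Finset.card_eq_sum_card_fiberwise
      (f := fun j : Fin n => rho f j.val) (t := range n) (s := univ)
      (fun x _ => mem_range.mpr (lt_of_le_of_lt (rho_le f x.val) x.isLt))
    simp only [Finset.card_univ, Fintype.card_fin] at h
    simp only [fib]
    exact h.symm
  have hsum2 : ∑ m ∈ range n, icnt f m (m + 1) = n := by
    have := Finset.card_eq_sum_card_fiberwise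
      (f := fun j : Fin n => (f j).val) (t := range n) (s := univ)
      (fun x _ => mem_range.mpr (f x).isLt)
    simp only [icnt_single]
    rw [← this, Finset.card_univ, Fintype.card_fin]

  have hle : ∀ m ∈ range n, (fib f m).card ≤ icnt f m (m + 1) :=
    fun m _ => card_fib_le hf m
  have := (Finset.sum_eq_sum_iff_of_le hle).mp (hsum1.trans hsum2.symm)
  exact this m (mem_range.mpr hm)



/-- the minimum of a finset of `Fin n`, as a natural number (`0` if empty). -/
def mno (B : Finset (Fin n)) : ℕ := if h : B.Nonempty then (B.min' h).val else 0

lemma mno_eq_min' {B : Finset (Fin n)} (h : B.Nonempty) : mno B = (B.min' h).val := by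
  simp [mno, h]

lemma mno_le {B : Finset (Fin n)} {x : Fin n} (hx : x ∈ B) : mno B ≤ x.val := by
  rw [mno_eq_min' ⟨x, hx⟩]
  exact B.min'_le x hx

lemma mno_mem {B : Finset (Fin n)} (h : B.Nonempty) : ∃ x ∈ B, x.val = mno B :=
  ⟨B.min' h, B.min'_mem h, (mno_eq_min' h).symm⟩

/-- The subtype of noncrossing parking functions. -/
abbrev NCP (n : ℕ) := {p : Σ π : Finpartition (Finset.univ : Finset (Fin n)),
        ({B // B ∈ π.parts} → Finset (Fin n)) //
      IsNoncrossing n p.1 ∧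
      (∀ B, (p.2 B).card = B.1.card) ∧
      (∀ B B', B ≠ B' → Disjoint (p.2 B) (p.2 B')) ∧
      (∀ i : Fin n, ∃ B, i ∈ p.2 B)}

/-- the underlying (to be shown: parking) function of a noncrossing parking function -/
noncomputable def phi (p : NCP n) : Fin n → Fin n := fun i =>
  (p.2.2.2.2 i).choose.1.min' (p.1.1.nonempty_of_mem_parts (p.2.2.2.2 i).choose.2)

lemma phi_mem_lab (p : NCP n) (i : Fin n) :
    i ∈ p.1.2 (p.2.2.2.2 i).choose := (p.2.2.2.2 i).choose_spec

lemma phi_val (p : NCP n) (i : Fin n) :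
    (phi p i).val = mno ((p.2.2.2.2 i).choose).1 := by
  rw [phi, mno_eq_min' (p.1.1.nonempty_of_mem_parts (p.2.2.2.2 i).choose.2)]

lemma phi_eq_of_mem_lab (p : NCP n) {i : Fin n} (B : {B // B ∈ p.1.1.parts})
    (hi : i ∈ p.1.2 B) : (phi p i).val = mno B.1 := by
  by_cases h : (p.2.2.2.2 i).choose = B
  · rw [phi_val, h]
  · exact absurd hi (Finset.disjoint_left.mp (p.2.2.2.1 _ _ h) (phi_mem_lab p i))

/-- key counting identity: the number of `j` whose `phi`-value satisfies `P` equals the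
total size of blocks whose min satisfies `P`. -/
lemma count_labels (p : NCP n) (P : ℕ → Prop) [DecidablePred P] :
    (univ.filter fun j => P ((phi p j).val)).card
      = ∑ B ∈ p.1.1.parts.filter (fun B => P (mno B)), B.card := by
  classical
  rw [Finset.card_eq_sum_card_fiberwise
    (f := fun j : Fin n => ((p.2.2.2.2 j).choose : {B // B ∈ p.1.1.parts}).1)
    (t := p.1.1.parts.filter fun B => P (mno B))
    (fun x hx => by
      exact mem_filter.mpr ⟨(p.2.2.2.2 x).choose.2, by rw [← phi_val]; simpa using hx⟩)]
  refine Finset.sum_congr rfl (fun B hB => ?_)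
  obtain ⟨hB', hPB⟩ := mem_filter.mp hB
  have hfib : ((univ.filter fun j : Fin n => P ((phi p j).val)).filter
      (fun j => ((p.2.2.2.2 j).choose : {B // B ∈ p.1.1.parts}).1 = B)) = p.1.2 ⟨B, hB'⟩ := by
    ext j
    simp only [mem_filter, mem_univ, true_and]
    constructor
    · rintro ⟨_, hc⟩
      have := phi_mem_lab p j
      rwa [show (p.2.2.2.2 j).choose = ⟨B, hB'⟩ from Subtype.ext hc] at this
    · intro hj
      by_cases h : (p.2.2.2.2 j).choose = ⟨B, hB'⟩
      · exact ⟨by rw [phi_val, h]; exact hPB, by rw [h]⟩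
      · exact absurd hj (Finset.disjoint_left.mp (p.2.2.2.1 _ _ h) (phi_mem_lab p j))
  rw [hfib, p.2.2.1 ⟨B, hB'⟩]

lemma card_biUnion_parts (π : Finpartition (Finset.univ : Finset (Fin n)))
    {Q : Finset (Finset (Fin n))} (hQ : Q ⊆ π.parts) :
    (Q.biUnion id).card = ∑ B ∈ Q, B.card :=
  Finset.card_biUnion (fun x hx y hy hxy => π.disjoint (hQ hx) (hQ hy) hxy)

lemma card_val_lt {k : ℕ} (hk : k ≤ n) :
    (univ.filter fun x : Fin n => x.val < k).card = k := by
  have : (univ.filter fun x : Fin n => x.val < k)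
      = (range k).attachFin (fun m hm => lt_of_lt_of_le (mem_range.mp hm) hk) := by
    ext x
    simp [Finset.mem_attachFin]
  rw [this, Finset.card_attachFin, card_range]

lemma card_val_range {a b : ℕ} (hb : b ≤ n) (hab : a ≤ b) :
    (univ.filter fun x : Fin n => a ≤ x.val ∧ x.val < b).card = b - a := by
  have hsplit : (univ.filter fun x : Fin n => x.val < a)
      ∪ (univ.filter fun x : Fin n => a ≤ x.val ∧ x.val < b)
      = univ.filter fun x : Fin n => x.val < b := by
    ext x
    simp only [mem_union, mem_filter, mem_univ, true_and]
    omega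
  have hdisj : Disjoint (univ.filter fun x : Fin n => x.val < a)
      (univ.filter fun x : Fin n => a ≤ x.val ∧ x.val < b) := by
    rw [Finset.disjoint_left]
    intro x hx hx'
    simp only [mem_filter, mem_univ, true_and] at hx hx'
    omega
  have := card_union_of_disjoint hdisj
  rw [hsplit, card_val_lt hb, card_val_lt (le_trans hab hb)] at this
  omega

lemma icnt_phi (p : NCP n) (a b : ℕ) :
    icnt (phi p) a b = ((p.1.1.parts.filter
      (fun B => a ≤ mno B ∧ mno B < b)).biUnion id).card := by
  rw [icnt, count_labels p (fun v => a ≤ v ∧ v < b),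
    card_biUnion_parts p.1.1 (filter_subset _ _)]

lemma pp_min (p : NCP n) {B : Finset (Fin n)} (hB : B ∈ p.1.1.parts) {i : Fin n}
    (hi : i ∈ B) : pp (phi p) i.val (mno B) := by
  have hne : B.Nonempty := ⟨i, hi⟩
  have hmi : mno B ≤ i.val := mno_le hi
  have hsub : (univ.filter fun x : Fin n => mno B ≤ x.val ∧ x.val < i.val + 1)
      ⊆ (p.1.1.parts.filter (fun B' => mno B ≤ mno B' ∧ mno B' < i.val + 1)).biUnion id := by
    intro x hx
    simp only [mem_filter, mem_univ, true_and] at hx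
    obtain ⟨Bx, hBx, hxBx⟩ := p.1.1.exists_mem (mem_univ x)
    refine mem_biUnion.mpr ⟨Bx, mem_filter.mpr ⟨hBx, ?_, ?_⟩, hxBx⟩
    · -- mno B ≤ mno Bx
      by_cases hBB : Bx = B
      · rw [hBB]
      · by_contra hlt
        push_neg at hlt
        have hxB : x ∉ B := fun hxB => hBB (p.1.1.eq_of_mem_parts hBx hB hxBx hxB)
        obtain ⟨mB, hmB, hmBv⟩ := mno_mem hne
        obtain ⟨mBx, hmBx, hmBxv⟩ := mno_mem (⟨x, hxBx⟩ : Bx.Nonempty)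
        have hxne : x.val ≠ mno B := fun hc => hxB (by
          have : x = mB := Fin.ext (by omega)
          rw [this]; exact hmB)
        have hine : x ≠ i := fun hc => hxB (hc ▸ hi)
        have hxine : x.val ≠ i.val := fun hc => hine (Fin.ext hc)
        have := p.2.1 mBx mB x i
          (by rw [Fin.lt_def]; omega)
          (by rw [Fin.lt_def]; omega)
          (by rw [Fin.lt_def]; omega)
          Bx hBx B hB hmBx hxBx hmB hi
        exact hBB this
    · have := mno_le hxBx; omega
  have hT := card_val_range (a := mno B) (b := i.val + 1) i.isLt (by omega)
  have hle := card_le_card hsub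
  rw [hT, ← icnt_phi p (mno B) (i.val + 1)] at hle
  unfold pp
  omega

lemma not_pp_mid (p : NCP n) {B : Finset (Fin n)} (hB : B ∈ p.1.1.parts) {i : Fin n}
    (hi : i ∈ B) {m' : ℕ} (h1 : mno B < m') (h2 : m' ≤ i.val) :
    ¬ pp (phi p) i.val m' := by
  have hne : B.Nonempty := ⟨i, hi⟩
  have hsub : (p.1.1.parts.filter (fun B' => m' ≤ mno B' ∧ mno B' < i.val + 1)).biUnion id
      ⊆ univ.filter fun x : Fin n => m' ≤ x.val ∧ x.val < i.val := by
    intro x hx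
    obtain ⟨B', hB', hxB'⟩ := mem_biUnion.mp hx
    simp only [id_eq] at hxB'
    obtain ⟨hB'p, hm1, hm2⟩ := mem_filter.mp hB'
    simp only [mem_filter, mem_univ, true_and]
    have hxm := mno_le hxB'
    have hBB : B' ≠ B := fun hc => by rw [hc] at hm1; omega
    have hine : x ≠ i := fun hc =>
      hBB (p.1.1.eq_of_mem_parts hB'p hB (hc ▸ hxB') hi)
    obtain ⟨μ, hμB', hμv⟩ := mno_mem (⟨x, hxB'⟩ : B'.Nonempty)
    have hμne : μ ≠ i := fun hc => hBB (p.1.1.eq_of_mem_parts hB'p hB (hc ▸ hμB') hi)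
    have hμvne : μ.val ≠ i.val := fun hc => hμne (Fin.ext hc)
    obtain ⟨mB, hmB, hmBv⟩ := mno_mem hne
    constructor
    · omega
    · by_contra hge
      push_neg at hge
      have hxine : x.val ≠ i.val := fun hc => hine (Fin.ext hc)
      have := p.2.1 mB μ i x
        (by rw [Fin.lt_def]; omega)
        (by rw [Fin.lt_def]; omega)
        (by rw [Fin.lt_def]; omega)
        B hB B' hB'p hmB hi hμB' hxB'
      exact hBB this.symm
  have hle := card_le_card hsub
  rw [card_val_range (a := m') (b := i.val) (by omega) h2, ← icnt_phi p] at hle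
  unfold pp
  omega

lemma rho_phi (p : NCP n) {B : Finset (Fin n)} (hB : B ∈ p.1.1.parts) {i : Fin n}
    (hi : i ∈ B) : rho (phi p) i.val = mno B := by
  have h1 : pp (phi p) i.val (mno B) := pp_min p hB hi
  have hmi : mno B ≤ i.val := mno_le hi
  refine le_antisymm ?_ (Nat.le_findGreatest hmi h1)
  by_contra hlt
  push_neg at hlt
  exact not_pp_mid p hB hi hlt (rho_le _ _)
    (Nat.findGreatest_spec (m := mno B) hmi h1)

lemma phi_park (p : NCP n) : IsPark (phi p) := by
  intro k hk
  have hsub : (univ.filter fun x : Fin n => x.val < k)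
      ⊆ (p.1.1.parts.filter (fun B' => 0 ≤ mno B' ∧ mno B' < k)).biUnion id := by
    intro x hx
    simp only [mem_filter, mem_univ, true_and] at hx
    obtain ⟨Bx, hBx, hxBx⟩ := p.1.1.exists_mem (mem_univ x)
    refine mem_biUnion.mpr ⟨Bx, mem_filter.mpr ⟨hBx, Nat.zero_le _, ?_⟩, hxBx⟩
    have := mno_le hxBx; omega
  have hle := card_le_card hsub
  rw [card_val_lt hk, ← icnt_phi p 0 k, icnt_zero] at hle
  exact hle

lemma parts_eq_fib (p : NCP n) {B : Finset (Fin n)} (hB : B ∈ p.1.1.parts) :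
    B = univ.filter (fun j : Fin n => rho (phi p) j.val = mno B) := by
  ext j
  simp only [mem_filter, mem_univ, true_and]
  constructor
  · exact fun hj => rho_phi p hB hj
  · intro hj
    obtain ⟨Bj, hBj, hjBj⟩ := p.1.1.exists_mem (mem_univ j)
    have h2 : rho (phi p) j.val = mno Bj := rho_phi p hBj hjBj
    have hmm : mno Bj = mno B := by omega
    have hne : B.Nonempty := p.1.1.nonempty_of_mem_parts hB
    obtain ⟨mB, hmB, hmBv⟩ := mno_mem hne
    obtain ⟨mBj, hmBj, hmBjv⟩ := mno_mem (p.1.1.nonempty_of_mem_parts hBj)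
    have hee : mB = mBj := Fin.ext (by omega)
    have : B = Bj := p.1.1.eq_of_mem_parts hB hBj hmB (by rw [hee]; exact hmBj)
    rw [this]
    exact hjBj

lemma lab_eq (p : NCP n) (B : {B // B ∈ p.1.1.parts}) :
    p.1.2 B = univ.filter (fun j : Fin n => (phi p j).val = mno B.1) := by
  ext j
  simp only [mem_filter, mem_univ, true_and]
  constructor
  · exact fun hj => phi_eq_of_mem_lab p B hj
  · intro hj
    have h1 : (phi p j).val = mno ((p.2.2.2.2 j).choose).1 := phi_val p j
    have hnec : ((p.2.2.2.2 j).choose).1.Nonempty :=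
      p.1.1.nonempty_of_mem_parts (p.2.2.2.2 j).choose.2
    have hneB : B.1.Nonempty := p.1.1.nonempty_of_mem_parts B.2
    have hmm : mno ((p.2.2.2.2 j).choose).1 = mno B.1 := by omega
    obtain ⟨mc, hmc, hmcv⟩ := mno_mem hnec
    obtain ⟨mB, hmB, hmBv⟩ := mno_mem hneB
    have hce : mc = mB := Fin.ext (by omega)
    have heq : (p.2.2.2.2 j).choose = B :=
      Subtype.ext (p.1.1.eq_of_mem_parts (p.2.2.2.2 j).choose.2 B.2 hmc
        (by rw [hce]; exact hmB))
    have := phi_mem_lab p j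
    rwa [heq] at this

lemma phi_injective : Function.Injective (phi (n := n)) := by
  intro p q h
  have hparts : ∀ (p q : NCP n), phi p = phi q →
      ∀ B ∈ p.1.1.parts, B ∈ q.1.1.parts := by
    intro p q h B hB
    obtain ⟨i, hi⟩ := p.1.1.nonempty_of_mem_parts hB
    obtain ⟨Bq, hBq, hiBq⟩ := q.1.1.exists_mem (mem_univ i)
    have e1 := parts_eq_fib p hB
    have e2 := parts_eq_fib q hBq
    have h1 : rho (phi p) i.val = mno B := rho_phi p hB hi
    have h2 : rho (phi q) i.val = mno Bq := rho_phi q hBq hiBq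
    rw [h] at e1 h1
    have : mno B = mno Bq := by omega
    rw [this] at e1
    rw [e1, ← e2]
    exact hBq
  obtain ⟨⟨π, lab⟩, hp⟩ := p
  obtain ⟨⟨π', lab'⟩, hq⟩ := q
  have hππ : π = π' := Finpartition.ext (Finset.Subset.antisymm
    (fun B hB => hparts _ _ h B hB) (fun B hB => hparts _ _ h.symm B hB))
  subst hππ
  have hlab : lab = lab' := by
    funext B
    have e1 := lab_eq ⟨⟨π, lab⟩, hp⟩ B
    have e2 := lab_eq ⟨⟨π, lab'⟩, hq⟩ B
    simp only at e1 e2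
    rw [e1, e2, h]
  subst hlab
  rfl

lemma mem_fib {f : Fin n → Fin n} {m : ℕ} {j : Fin n} :
    j ∈ fib f m ↔ rho f j.val = m := by simp [fib]

/-- the partition of `Fin n` into fibers of `rho f` -/
def parkPartition (f : Fin n → Fin n) : Finpartition (Finset.univ : Finset (Fin n)) where
  parts := univ.image (fun i : Fin n => fib f (rho f i.val))
  supIndep := by
    rw [Finset.supIndep_iff_pairwiseDisjoint]
    intro B hB B' hB' hne
    simp only [coe_image, Set.mem_image, mem_coe, mem_univ, true_and, Set.mem_setOf_eq] at hB hB'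
    obtain ⟨i, _, rfl⟩ := hB
    obtain ⟨i', _, rfl⟩ := hB'
    simp only [Function.onFun, id_eq]
    rw [Finset.disjoint_left]
    intro j hj hj'
    simp only [fib, mem_filter, mem_univ, true_and] at hj hj'
    exact hne (by rw [← hj, ← hj'])
  sup_parts := by
    apply le_antisymm (Finset.sup_le fun B _ => le_top)
    intro x _
    rw [Finset.mem_sup]
    exact ⟨fib f (rho f x.val), mem_image.mpr ⟨x, mem_univ x, rfl⟩,
      mem_filter.mpr ⟨mem_univ x, rfl⟩⟩
  bot_notMem := by
    intro h
    obtain ⟨i, _, hfib⟩ := mem_image.mp h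
    have : i ∈ fib f (rho f i.val) := mem_filter.mpr ⟨mem_univ i, rfl⟩
    rw [hfib] at this
    exact absurd this (notMem_empty i)

lemma mem_parkPartition {f : Fin n → Fin n} {B : Finset (Fin n)} :
    B ∈ (parkPartition f).parts ↔ ∃ i : Fin n, fib f (rho f i.val) = B := by
  simp [parkPartition, mem_image]

lemma mno_fib {f : Fin n → Fin n} (hf : IsPark f) (i : Fin n) :
    mno (fib f (rho f i.val)) = rho f i.val := by
  have hm_lt : rho f i.val < n := lt_of_le_of_lt (rho_le f i.val) i.isLt
  have hpos : 0 < icnt f (rho f i.val) (rho f i.val + 1) := rho_count_pos hf i.isLt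
  have hmm : (⟨rho f i.val, hm_lt⟩ : Fin n) ∈ fib f (rho f i.val) :=
    mem_filter.mpr ⟨mem_univ _, rho_eq_self hpos⟩
  have hne : (fib f (rho f i.val)).Nonempty := ⟨_, hmm⟩
  rw [mno_eq_min' hne]
  apply le_antisymm
  · have := Finset.min'_le _ _ hmm
    rw [Fin.le_def] at this
    exact this
  · have hmin : rho f ((fib f (rho f i.val)).min' hne).val = rho f i.val :=
      mem_fib.mp (Finset.min'_mem _ hne)
    have := rho_le f ((fib f (rho f i.val)).min' hne).val
    omega

/-- the labels: `L_B` is the `f`-preimage of the min of `B` -/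
def parkLab (f : Fin n → Fin n) : {B // B ∈ (parkPartition f).parts} → Finset (Fin n) :=
  fun B => univ.filter fun j => (f j).val = mno B.1

lemma phi_surjective (f : Fin n → Fin n) (hf : IsPark f) :
    ∃ p : NCP n, phi p = f := by
  have hnc : IsNoncrossing n (parkPartition f) := by
    intro a b c d hab hbc hcd B hB B' hB' haB hcB hbB' hdB'
    obtain ⟨i, hi⟩ := mem_parkPartition.mp hB
    obtain ⟨i', hi'⟩ := mem_parkPartition.mp hB'
    rw [← hi] at haB hcB
    rw [← hi'] at hbB' hdB'
    simp only [fib, mem_filter, mem_univ, true_and] at haB hcB hbB' hdB'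
    rw [Fin.lt_def] at hab hbc hcd
    have h1 : rho f c.val ≤ rho f b.val := by
      rcases rho_nest hf hbc c.isLt with h | h
      · exact h
      · have := rho_le f a.val; omega
    have h2 : rho f d.val ≤ rho f c.val := by
      rcases rho_nest hf hcd d.isLt with h | h
      · exact h
      · have := rho_le f b.val; omega
    have heq : rho f i.val = rho f i'.val := by omega
    rw [← hi, ← hi', heq]
  have hcard : ∀ B : {B // B ∈ (parkPartition f).parts},
      (parkLab f B).card = B.1.card := by
    intro B
    obtain ⟨i, hi⟩ := mem_parkPartition.mp B.2
    have hmno : mno B.1 = rho f i.val := by rw [← hi, mno_fib hf]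
    have hmlt : rho f i.val < n := lt_of_le_of_lt (rho_le f i.val) i.isLt
    simp only [parkLab]
    rw [hmno, ← icnt_single, ← hi, card_fib hf _ hmlt]
  have hdisj : ∀ B B' : {B // B ∈ (parkPartition f).parts}, B ≠ B' →
      Disjoint (parkLab f B) (parkLab f B') := by
    intro B B' hne
    have hmne : mno B.1 ≠ mno B'.1 := by
      intro hc
      obtain ⟨i, hi⟩ := mem_parkPartition.mp B.2
      obtain ⟨i', hi'⟩ := mem_parkPartition.mp B'.2
      apply hne
      apply Subtype.ext
      rw [← hi, ← hi'] at hc ⊢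
      rw [mno_fib hf, mno_fib hf] at hc
      rw [hc]
    rw [Finset.disjoint_left]
    intro j hj hj'
    simp only [parkLab, mem_filter, mem_univ, true_and] at hj hj'
    exact hmne (by rw [← hj, ← hj'])
  have hcov : ∀ i : Fin n, ∃ B : {B // B ∈ (parkPartition f).parts}, i ∈ parkLab f B := by
    intro i
    have hmlt : (f i).val < n := (f i).isLt
    have hpos : 0 < icnt f (f i).val ((f i).val + 1) := by
      rw [icnt_single]
      exact card_pos.mpr ⟨i, mem_filter.mpr ⟨mem_univ i, rfl⟩⟩
    have hrr : rho f ((f i) : Fin n).val = (f i).val := rho_eq_self hpos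
    refine ⟨⟨fib f (f i).val, mem_parkPartition.mpr ⟨f i, by rw [hrr]⟩⟩, ?_⟩
    simp only [parkLab, mem_filter, mem_univ, true_and]
    have := mno_fib hf (f i)
    rw [hrr] at this
    rw [this]
  refine ⟨⟨⟨parkPartition f, parkLab f⟩, hnc, hcard, hdisj, hcov⟩, ?_⟩
  funext i
  apply Fin.ext
  obtain ⟨B, hB⟩ := hcov i
  have h1 := phi_eq_of_mem_lab ⟨⟨parkPartition f, parkLab f⟩, hnc, hcard, hdisj, hcov⟩ B hB
  have h2 : (f i).val = mno B.1 := by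
    have := hB
    simp only [parkLab, mem_filter, mem_univ, true_and] at this
    exact this
  rw [h1, h2]

/-! ### Pollak's argument: there are `(n+1)^(n-1)` parking functions -/

/-- number of cars preferring one of the first `k` spots after shifting by `c` -/
def pcnt (g : Fin n → ZMod (n + 1)) (c : ZMod (n + 1)) (k : ℕ) : ℕ :=
  (univ.filter fun i => (g i - c).val < k).card

def PGood (g : Fin n → ZMod (n + 1)) (c : ZMod (n + 1)) : Prop :=
  ∀ k, k ≤ n → k ≤ pcnt g c k

/-- number of cars preferring exactly spot `t mod (n+1)` -/
def hcnt (g : Fin n → ZMod (n + 1)) (t : ℕ) : ℕ :=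
  (univ.filter fun i => g i = (t : ZMod (n + 1))).card

/-- cumulative counts -/
def shc (g : Fin n → ZMod (n + 1)) (t : ℕ) : ℕ := ∑ j ∈ range t, hcnt g j

lemma shc_add (g : Fin n → ZMod (n + 1)) (a k : ℕ) :
    shc g (a + k) = shc g a + ∑ j ∈ range k, hcnt g (a + j) :=
  Finset.sum_range_add (hcnt g) a k

lemma pcnt_eq (g : Fin n → ZMod (n + 1)) (c : ZMod (n + 1)) {k : ℕ} (hk : k ≤ n + 1) :
    pcnt g c k = ∑ j ∈ range k, hcnt g (c.val + j) := by
  rw [pcnt, Finset.card_eq_sum_card_fiberwise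
    (f := fun i : Fin n => (g i - c).val) (t := range k)
    (fun x hx => by simpa using (mem_filter.mp hx).2)]
  refine Finset.sum_congr rfl (fun j hj => ?_)
  rw [mem_range] at hj
  rw [hcnt]
  congr 1
  ext i
  simp only [mem_filter, mem_univ, true_and]
  constructor
  · rintro ⟨_, hv⟩
    have : g i - c = (j : ZMod (n + 1)) := by
      have := ZMod.natCast_rightInverse (n := n + 1) (g i - c)
      rw [← this, hv]
    push_cast
    rw [ZMod.natCast_val, ZMod.cast_id]
    rw [sub_eq_iff_eq_add] at this
    rw [this]
    ring
  · intro hv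
    have hgc : g i - c = (j : ZMod (n + 1)) := by
      rw [hv]
      push_cast
      rw [ZMod.natCast_val, ZMod.cast_id]
      ring
    have : (g i - c).val = ((j : ℕ) : ZMod (n + 1)).val := by rw [hgc]
    rw [ZMod.val_cast_of_lt (by omega)] at this
    exact ⟨by omega, this⟩

lemma shc_period (g : Fin n → ZMod (n + 1)) (t : ℕ) :
    shc g (t + (n + 1)) = shc g t + n := by
  rw [shc_add]
  congr 1
  have h1 : ∑ j ∈ range (n + 1), hcnt g (t + j)
      = ∑ v : ZMod (n + 1), (univ.filter fun i => g i = v).card := by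
    apply Finset.sum_bij (i := fun (j : ℕ) (_ : j ∈ range (n + 1)) => ((t + j : ℕ) : ZMod (n + 1)))
    · intro a _; exact mem_univ _
    · intro a ha b hb hab
      rw [mem_range] at ha hb
      have : ((a : ℕ) : ZMod (n + 1)) = ((b : ℕ) : ZMod (n + 1)) := by
        push_cast at hab ⊢
        exact add_left_cancel hab
      have := congrArg ZMod.val this
      rwa [ZMod.val_cast_of_lt (by omega), ZMod.val_cast_of_lt (by omega)] at this
    · intro v _
      refine ⟨(v - (t : ZMod (n + 1))).val, mem_range.mpr (ZMod.val_lt _), ?_⟩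
      push_cast
      rw [ZMod.natCast_val, ZMod.cast_id]
      ring
    · intro a _; rfl
  rw [h1, ← Finset.card_eq_sum_card_fiberwise (f := fun i : Fin n => g i) (t := univ)
    (fun x _ => mem_univ _), Finset.card_univ, Fintype.card_fin]

/-- the ℤ-valued profile function -/
def fprof (g : Fin n → ZMod (n + 1)) (t : ℕ) : ℤ := (shc g t : ℤ) - t

lemma pgood_iff (g : Fin n → ZMod (n + 1)) (c : ZMod (n + 1)) :
    PGood g c ↔ ∀ k, k ≤ n → fprof g c.val ≤ fprof g (c.val + k) := by
  unfold PGood fprof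
  apply forall_congr'
  intro k
  apply imp_congr_right
  intro hk
  rw [pcnt_eq g c (by omega), shc_add]
  omega

lemma fprof_period (g : Fin n → ZMod (n + 1)) (t : ℕ) :
    fprof g (t + (n + 1)) = fprof g t - 1 := by
  unfold fprof
  rw [shc_period]
  push_cast
  ring

lemma exists_unique_pgood (g : Fin n → ZMod (n + 1)) : ∃! c, PGood g c := by
  have hminex : ∃ t, t ≤ n ∧ ∀ j, j ≤ n → fprof g t ≤ fprof g j := by
    obtain ⟨t, ht, hmin⟩ := Finset.exists_min_image (range (n + 1)) (fprof g) ⟨0, by simp⟩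
    exact ⟨t, Nat.lt_succ_iff.mp (by simpa using ht), fun j hj => hmin j (mem_range.mpr (by omega))⟩
  classical
  set c0 := Nat.find hminex with hc0
  obtain ⟨hc0n, hc0min⟩ := Nat.find_spec hminex
  have hfirst : ∀ j, j < c0 → fprof g c0 < fprof g j := by
    intro j hj
    have := Nat.find_min hminex hj
    push_neg at this
    obtain ⟨k, hk, hfk⟩ := this (by omega)
    exact lt_of_le_of_lt (hc0min k hk) hfk
  have hval : ((c0 : ZMod (n + 1))).val = c0 := ZMod.val_cast_of_lt (by omega)
  refine ⟨(c0 : ZMod (n + 1)), ?_, ?_⟩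
  · show PGood g _
    rw [pgood_iff, hval]
    intro k hk
    rcases le_or_gt (c0 + k) n with h | h
    · exact hc0min _ h
    · have hr : c0 + k = (c0 + k - (n + 1)) + (n + 1) := by omega
      rw [hr, fprof_period]
      have := hfirst (c0 + k - (n + 1)) (by omega)
      omega
  · -- uniqueness
    intro c hc
    by_contra hne
    have hgood0 : PGood g (c0 : ZMod (n + 1)) := by
      rw [pgood_iff, hval]
      intro k hk
      rcases le_or_gt (c0 + k) n with h | h
      · exact hc0min _ h
      · have hr : c0 + k = (c0 + k - (n + 1)) + (n + 1) := by omega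
        rw [hr, fprof_period]
        have := hfirst (c0 + k - (n + 1)) (by omega)
        omega
    -- generic contradiction for two distinct good shifts
    have key : ∀ c1 c2 : ZMod (n + 1), PGood g c1 → PGood g c2 → c1.val < c2.val → False := by
      intro c1 c2 h1 h2 hlt
      have hv1 : c1.val < n + 1 := ZMod.val_lt _
      have hv2 : c2.val < n + 1 := ZMod.val_lt _
      rw [pgood_iff] at h1 h2
      have ha : fprof g c1.val ≤ fprof g c2.val := by
        have := h1 (c2.val - c1.val) (by omega)
        rwa [show c1.val + (c2.val - c1.val) = c2.val by omega] at this
      have hb : fprof g c2.val ≤ fprof g (c1.val + (n + 1)) := by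
        have := h2 (c1.val + (n + 1) - c2.val) (by omega)
        rwa [show c2.val + (c1.val + (n + 1) - c2.val) = c1.val + (n + 1) by omega] at this
      rw [fprof_period] at hb
      omega
    have hvne : c.val ≠ ((c0 : ZMod (n + 1))).val := fun hc' => hne (ZMod.val_injective _ hc')
    rcases lt_or_gt_of_ne hvne with h | h
    · exact key _ _ hc hgood0 h
    · exact key _ _ hgood0 hc h

/-- placing cars with preferences `f` shifted by `c` -/
def theta (cf : ZMod (n + 1) × {f : Fin n → Fin n // IsPark f}) : Fin n → ZMod (n + 1) :=
  fun i => (((cf.2.1 i).val : ZMod (n + 1))) + cf.1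

lemma theta_sub_val (c : ZMod (n + 1)) (f : {f : Fin n → Fin n // IsPark f}) (i : Fin n) :
    (theta (c, f) i - c).val = (f.1 i).val := by
  unfold theta
  simp only [add_sub_cancel_right]
  exact ZMod.val_cast_of_lt (by have := (f.1 i).isLt; omega)

lemma pgood_theta (c : ZMod (n + 1)) (f : {f : Fin n → Fin n // IsPark f}) :
    PGood (theta (c, f)) c := by
  intro k hk
  have : pcnt (theta (c, f)) c k = (univ.filter fun i => (f.1 i).val < k).card := by
    unfold pcnt
    congr 1
    ext i
    simp only [mem_filter, mem_univ, true_and, theta_sub_val]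
  rw [this]
  exact f.2 k hk

lemma theta_bijective : Function.Bijective (theta (n := n)) := by
  constructor
  · rintro ⟨c, f⟩ ⟨c', f'⟩ h
    obtain ⟨cu, _, huniq⟩ := exists_unique_pgood (theta (c, f))
    have hg1 : PGood (theta (c, f)) c := pgood_theta c f
    have hg2 : PGood (theta (c, f)) c' := by rw [h]; exact pgood_theta c' f'
    have hcc : c = c' := by rw [huniq c hg1, huniq c' hg2]
    subst hcc
    have hff : f = f' := by
      apply Subtype.ext
      funext i
      apply Fin.ext
      rw [← theta_sub_val c f i, ← theta_sub_val c f' i, h]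
    rw [hff]
  · intro g
    obtain ⟨c, hc, _⟩ := exists_unique_pgood g
    have hvals : ∀ i, (g i - c).val < n := by
      intro i
      have hn := hc n (le_refl n)
      have hcardle : (univ.filter fun i => (g i - c).val < n).card ≤ n := by
        have := Finset.card_filter_le (univ : Finset (Fin n)) (fun i => (g i - c).val < n)
        simpa using this
      have huniv : (univ.filter fun i => (g i - c).val < n) = univ :=
        Finset.eq_univ_of_card _ (by
          rw [Fintype.card_fin]
          unfold pcnt at hn
          omega)
      have := huniv ▸ mem_univ i
      exact (mem_filter.mp this).2
    set f : Fin n → Fin n := fun i => ⟨(g i - c).val, hvals i⟩ with hf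
    have hpark : IsPark f := by
      intro k hk
      have := hc k hk
      unfold pcnt at this
      convert this using 2
    refine ⟨(c, ⟨f, hpark⟩), ?_⟩
    funext i
    show ((f i).val : ZMod (n + 1)) + c = g i
    have : ((f i).val : ZMod (n + 1)) = g i - c := by
      simp only [hf]
      exact ZMod.natCast_rightInverse (g i - c)
    rw [this]
    ring

lemma card_parking : Nat.card {f : Fin n → Fin n // IsPark f} = (n + 1) ^ (n - 1) := by
  have hcard := Nat.card_eq_of_bijective _ (theta_bijective (n := n))
  rw [Nat.card_prod] at hcard
  have h1 : Nat.card (ZMod (n + 1)) = n + 1 := by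
    rw [Nat.card_eq_fintype_card, ZMod.card]
  have h2 : Nat.card (Fin n → ZMod (n + 1)) = (n + 1) ^ n := by
    rw [Nat.card_eq_fintype_card, Fintype.card_fun, Fintype.card_fin, ZMod.card]
  rw [h1, h2] at hcard
  have h3 : (n + 1) ^ n = (n + 1) * (n + 1) ^ (n - 1) := by
    cases n with
    | zero => simp
    | succ m => rw [pow_succ']; simp
  rw [h3] at hcard
  exact Nat.eq_of_mul_eq_mul_left (by omega) hcard

lemma card_NCP : Nat.card (NCP n) = (n + 1) ^ (n - 1) := by
  have hbij : Function.Bijective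
      (fun p : NCP n => (⟨phi p, phi_park p⟩ : {f : Fin n → Fin n // IsPark f})) := by
    constructor
    · intro p q h
      exact phi_injective (congrArg Subtype.val h)
    · intro f
      obtain ⟨p, hp⟩ := phi_surjective f.1 f.2
      exact ⟨p, Subtype.ext hp⟩
  rw [Nat.card_eq_of_bijective _ hbij]
  exact card_parking

end NCPFproof

/-- The number of type `A_{n-1}` noncrossing parking functions — pairs of a noncrossing
partition `{B_1,…,B_r}` of `[n]` together with an assignment `B ↦ L_B` of pairwise
disjoint label sets covering `[n]` with `|L_B| = |B|` for every block `B` — is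
`(n+1)^(n-1)`. -/
theorem card_typeA_noncrossingParkingFunctions (n : ℕ) :
    Nat.card {p : Σ π : Finpartition (Finset.univ : Finset (Fin n)),
        ({B // B ∈ π.parts} → Finset (Fin n)) //
      IsNoncrossing n p.1 ∧
      (∀ B, (p.2 B).card = B.1.card) ∧
      (∀ B B', B ≠ B' → Disjoint (p.2 B) (p.2 B')) ∧
      (∀ i : Fin n, ∃ B, i ∈ p.2 B)} = (n + 1) ^ (n - 1) := by
  exact NCPFproof.card_NCP
end
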